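/- Let M be a Riemannian manifold with continuous metric and S ⊂ M compact and path-connected. For every x, y ∈ S and ε > 0, the set F_ε(x,y,S) is open in the space Lip₁(M,ℝⁿ) of 1-Lipschitz maps with the metric of uniform convergence D(f,g) = min{1, sup_M |f-g|}. -/

import Mathlib

open scoped ENNReal

/-- A rectifiable curve in `S` from `x` to `y`, parametrized on `[0,1]`. -/
def IsCurve {M : Type*} [MetricSpace M] (S : Set M) (x y : M) (γ : ℝ → M) : Prop :=
  ContinuousOn γ (Set.Icc 0 1) ∧ Set.MapsTo γ (Set.Icc 0 1) S ∧
    γ 0 = x ∧ γ 1 = y ∧ eVariationOn γ (Set.Icc 0 1) ≠ ⊤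

/-- The intrinsic distance in `S` : the infimum of lengths of rectifiable curves
in `S` joining `x` to `y`. -/
noncomputable def dS {M : Type*} [MetricSpace M] (S : Set M) (x y : M) : ℝ≥0∞ :=
  ⨅ (γ : ℝ → M) (_ : IsCurve S x y γ), eVariationOn γ (Set.Icc 0 1)

/-- The condition defining `F_ε(x,y,S)` for a map `f : M → ℝⁿ`:
`ℓ(f∘γ) + ε ℓ(γ) > (1-ε) d_S(x,y)` for every rectifiable curve `γ` in `S`
from `x` to `y`. -/
def MemF {M : Type*} [MetricSpace M] (n : ℕ) (ε : ℝ) (S : Set M) (x y : M)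
    (f : M → EuclideanSpace ℝ (Fin n)) : Prop :=
  ∀ γ : ℝ → M, IsCurve S x y γ →
    ENNReal.ofReal (1 - ε) * dS S x y <
      eVariationOn (f ∘ γ) (Set.Icc 0 1) + ENNReal.ofReal ε * eVariationOn γ (Set.Icc 0 1)


section Aux
open Set Filter Topology
open scoped ENNReal NNReal

variable {E : Type*} [PseudoEMetricSpace E]

lemma right_small {γ : ℝ → E} (hcont : ContinuousOn γ (Icc 0 1))
    (hfin : eVariationOn γ (Icc 0 1) ≠ ⊤) {t₀ : ℝ} (ht₀ : t₀ ∈ Ico (0:ℝ) 1)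
    {ε : ℝ≥0∞} (hε : ε ≠ 0) :
    ∃ w ∈ Ioc t₀ 1, eVariationOn γ (Icc 0 1 ∩ Icc t₀ w) < ε := by
  set s : Set ℝ := Icc 0 1 with hs
  set A := eVariationOn γ (s ∩ Icc t₀ 1) with hA
  have hAfin : A ≠ ⊤ := ne_top_of_le_ne_top hfin (eVariationOn.mono γ inter_subset_left)
  by_cases hAε : A < ε
  · exact ⟨1, ⟨ht₀.2, le_rfl⟩, hAε⟩
  push_neg at hAε
  have hεtop : ε ≠ ⊤ := ne_top_of_le_ne_top hAfin hAε
  set B := ⨆ (w) (_ : w ∈ s ∩ Ioc t₀ 1), eVariationOn γ (s ∩ Icc w 1) with hB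
  have hAB : A ≤ B := by
    rw [hA, eVariationOn]
    refine iSup_le ?_
    rintro ⟨n, ⟨u, hu, us⟩⟩
    dsimp only
    set l := 𝓝[>] t₀ with hl
    have hIoc : Ioc t₀ 1 ∈ l := Ioc_mem_nhdsGT_of_mem ⟨le_rfl, ht₀.2⟩
    have hterm : ∀ i : ℕ, Tendsto (fun w => γ (max (u i) w)) l (𝓝 (γ (u i))) := by
      intro i
      have hui := us i
      have hc : ContinuousWithinAt γ s (u i) := hcont (u i) hui.1
      have hmax : Tendsto (fun w : ℝ => max (u i) w) l (𝓝[s] (u i)) := by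
        rw [tendsto_nhdsWithin_iff]
        constructor
        · have h1 : Tendsto (fun w : ℝ => max (u i) w) (𝓝 t₀) (𝓝 (max (u i) t₀)) :=
            (continuous_const.max continuous_id).tendsto t₀
          have := h1.mono_left (nhdsWithin_le_nhds : l ≤ 𝓝 t₀)
          rwa [max_eq_left hui.2.1] at this
        · filter_upwards [hIoc] with w hw
          exact ⟨le_trans hui.1.1 (le_max_left _ _), max_le hui.1.2 hw.2⟩
      exact hc.tendsto.comp hmax
    have hsum : Tendsto
        (fun w => ∑ i ∈ Finset.range n, edist (γ (max (u (i+1)) w)) (γ (max (u i) w))) l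
        (𝓝 (∑ i ∈ Finset.range n, edist (γ (u (i+1))) (γ (u i)))) :=
      tendsto_finset_sum _ (fun i _ => (hterm (i+1)).edist (hterm i))
    refine le_of_tendsto hsum ?_
    filter_upwards [hIoc] with w hw
    have hws : w ∈ s := ⟨ht₀.1.trans hw.1.le, hw.2⟩
    have hle : ∑ i ∈ Finset.range n, edist (γ (max (u (i+1)) w)) (γ (max (u i) w)) ≤
        eVariationOn γ (s ∩ Icc w 1) :=
      eVariationOn.sum_le (n := n) (fun i j hij => max_le_max (hu hij) le_rfl)
        (fun i => ⟨⟨le_trans (us i).1.1 (le_max_left _ _), max_le (us i).1.2 hw.2⟩,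
          ⟨le_max_right _ _, max_le (us i).1.2 hw.2⟩⟩)
    exact hle.trans (le_iSup₂_of_le w ⟨hws, hw⟩ le_rfl)
  have hA0 : A ≠ 0 := fun h => hε (le_antisymm (h ▸ hAε) zero_le)
  have hhalf : (ε/2 : ℝ≥0∞) ≠ 0 := by simp [hε]
  have h2 : A - ε/2 < B := lt_of_lt_of_le (ENNReal.sub_lt_self hAfin hA0 hhalf) hAB
  rw [hB] at h2
  simp only [lt_iSup_iff] at h2
  obtain ⟨w, hw, hvar⟩ := h2
  refine ⟨w, hw.2, ?_⟩
  have hsplit := eVariationOn.Icc_add_Icc γ (s := s) hw.2.1.le hw.2.2 hw.1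
  have hYfin : eVariationOn γ (s ∩ Icc w 1) ≠ ⊤ :=
    ne_top_of_le_ne_top hAfin
      (eVariationOn.mono γ (inter_subset_inter_right _ (Icc_subset_Icc hw.2.1.le le_rfl)))
  have hX : eVariationOn γ (s ∩ Icc t₀ w) = A - eVariationOn γ (s ∩ Icc w 1) :=
    ENNReal.eq_sub_of_add_eq hYfin hsplit
  rw [hX]
  calc A - eVariationOn γ (s ∩ Icc w 1) ≤ A - (A - ε/2) := tsub_le_tsub_left hvar.le A
    _ ≤ ε/2 := by
        rw [tsub_le_iff_right, add_comm]
        exact le_tsub_add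
    _ < ε := ENNReal.half_lt_self hε hεtop

lemma left_small {γ : ℝ → E} (hcont : ContinuousOn γ (Icc 0 1))
    (hfin : eVariationOn γ (Icc 0 1) ≠ ⊤) {t₀ : ℝ} (ht₀ : t₀ ∈ Ioc (0:ℝ) 1)
    {ε : ℝ≥0∞} (hε : ε ≠ 0) :
    ∃ w ∈ Ico 0 t₀, eVariationOn γ (Icc 0 1 ∩ Icc w t₀) < ε := by
  set σ : ℝ → ℝ := fun t => 1 - t with hσ
  have hσanti : ∀ t : Set ℝ, AntitoneOn σ t := fun t a _ b _ hab => by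
    simp only [hσ]; linarith
  have hσs : σ '' Icc 0 1 = Icc (0:ℝ) 1 := by
    rw [show σ = (fun x => 1 - x) from rfl, Set.image_const_sub_Icc]; norm_num
  have key : ∀ a b : ℝ, eVariationOn (γ ∘ σ) (Icc 0 1 ∩ Icc a b) =
      eVariationOn γ (Icc 0 1 ∩ Icc (1-b) (1-a)) := by
    intro a b
    rw [eVariationOn.comp_eq_of_antitoneOn γ σ (hσanti _)]
    congr 1
    have hinj : Function.Injective σ := fun a b h => by simp only [hσ] at h; linarith
    rw [Set.image_inter hinj, hσs]
    congr 1
    rw [show σ = (fun x => 1 - x) from rfl, Set.image_const_sub_Icc]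
  have hcont' : ContinuousOn (γ ∘ σ) (Icc 0 1) := by
    apply hcont.comp ((continuous_const.sub continuous_id).continuousOn)
    intro t ht
    rw [← hσs]
    exact mem_image_of_mem σ ht
  have hfin' : eVariationOn (γ ∘ σ) (Icc 0 1) ≠ ⊤ := by
    rw [eVariationOn.comp_eq_of_antitoneOn γ σ (hσanti _), hσs]
    exact hfin
  obtain ⟨w', hw', hvar⟩ := right_small hcont' hfin' (t₀ := 1 - t₀)
    ⟨by linarith [ht₀.2], by linarith [ht₀.1]⟩ hε
  refine ⟨1 - w', ⟨by linarith [hw'.2], by linarith [hw'.1]⟩, ?_⟩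
  have := key (1 - t₀) w'
  rw [this] at hvar
  convert hvar using 3 <;> ring

lemma psi_continuousOn {γ : ℝ → E} (hcont : ContinuousOn γ (Icc 0 1))
    (hfin : eVariationOn γ (Icc 0 1) ≠ ⊤) :
    ContinuousOn (variationOnFromTo γ (Icc 0 1) 0) (Icc 0 1) := by
  set s : Set ℝ := Icc 0 1 with hsdef
  have h0s : (0:ℝ) ∈ s := ⟨le_rfl, zero_le_one⟩
  have hbv : BoundedVariationOn γ s := hfin
  have hlbv : LocallyBoundedVariationOn γ s := hbv.locallyBoundedVariationOn
  set ψ := variationOnFromTo γ s 0 with hψdef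
  intro t₀ ht₀
  rw [Metric.continuousWithinAt_iff]
  intro ε hε
  have hεe : ENNReal.ofReal ε ≠ 0 := (ENNReal.ofReal_pos.mpr hε).ne'
  have hR : ∃ wr, t₀ < wr ∧ ∀ t, t ∈ s → t₀ ≤ t → t ≤ wr → |ψ t - ψ t₀| < ε := by
    by_cases h1 : t₀ < 1
    · obtain ⟨w, hw, hvar⟩ := right_small hcont hfin ⟨ht₀.1, h1⟩ hεe
      refine ⟨w, hw.1, fun t hts htt₀ htw => ?_⟩
      have hadd := variationOnFromTo.add hlbv h0s ht₀ hts
      have heq : ψ t - ψ t₀ = variationOnFromTo γ s t₀ t := by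
        rw [hψdef]; linarith [hadd]
      rw [heq, variationOnFromTo.eq_of_le γ s htt₀, abs_of_nonneg ENNReal.toReal_nonneg]
      have hmono : eVariationOn γ (s ∩ Icc t₀ t) ≤ eVariationOn γ (s ∩ Icc t₀ w) :=
        eVariationOn.mono _ (inter_subset_inter_right _ (Icc_subset_Icc le_rfl htw))
      exact ENNReal.toReal_lt_of_lt_ofReal (hmono.trans_lt hvar)
    · push_neg at h1
      refine ⟨t₀ + 1, by linarith, fun t hts htt₀ _ => ?_⟩
      have : t = t₀ := le_antisymm (hts.2.trans h1) htt₀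
      simp [this, hε]
  have hL : ∃ wl, wl < t₀ ∧ ∀ t, t ∈ s → t ≤ t₀ → wl ≤ t → |ψ t - ψ t₀| < ε := by
    by_cases h0 : 0 < t₀
    · obtain ⟨w, hw, hvar⟩ := left_small hcont hfin ⟨h0, ht₀.2⟩ hεe
      refine ⟨w, hw.2, fun t hts htt₀ htw => ?_⟩
      have hadd := variationOnFromTo.add hlbv h0s hts ht₀
      have heq : ψ t₀ - ψ t = variationOnFromTo γ s t t₀ := by
        rw [hψdef]; linarith [hadd]
      rw [abs_sub_comm, heq, variationOnFromTo.eq_of_le γ s htt₀,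
        abs_of_nonneg ENNReal.toReal_nonneg]
      have hmono : eVariationOn γ (s ∩ Icc t t₀) ≤ eVariationOn γ (s ∩ Icc w t₀) :=
        eVariationOn.mono _ (inter_subset_inter_right _ (Icc_subset_Icc htw le_rfl))
      exact ENNReal.toReal_lt_of_lt_ofReal (hmono.trans_lt hvar)
    · push_neg at h0
      refine ⟨t₀ - 1, by linarith, fun t hts htt₀ _ => ?_⟩
      have : t = t₀ := le_antisymm htt₀ (h0.trans hts.1)
      simp [this, hε]
  obtain ⟨wr, hwr, hRa⟩ := hR
  obtain ⟨wl, hwl, hLa⟩ := hL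
  refine ⟨min (wr - t₀) (t₀ - wl), by simp [sub_pos, hwr, hwl], fun t hts hdist => ?_⟩
  rw [Real.dist_eq] at hdist
  have h1 := abs_lt.mp hdist
  rcases le_total t t₀ with h | h
  · exact hLa t hts h (by have := h1.1; have := min_le_right (wr - t₀) (t₀ - wl); linarith)
  · exact hRa t hts h (by have := h1.2; have := min_le_left (wr - t₀) (t₀ - wl); linarith)

lemma evar_ne_top_of_lip {M : Type*} [PseudoEMetricSpace M] {h : ℝ → M} {C : ℝ≥0}
    (hl : LipschitzOnWith C h (Icc 0 1)) : eVariationOn h (Icc 0 1) ≠ ⊤ := by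
  have h1 : eVariationOn (h ∘ id) (Icc 0 1) ≤ ↑C * eVariationOn (id : ℝ → ℝ) (Icc 0 1) :=
    hl.comp_eVariationOn_le (mapsTo_id _)
  rw [Function.comp_id] at h1
  have hid : MonotoneOn (id : ℝ → ℝ) (Icc 0 1) := fun a _ b _ hab => hab
  have h2 : eVariationOn (id : ℝ → ℝ) (Icc 0 1) ≤ ENNReal.ofReal (1 - 0) := by
    have := hid.eVariationOn_le ⟨le_rfl, zero_le_one⟩ ⟨zero_le_one, le_rfl⟩
    rwa [Set.inter_self] at this
  exact ne_top_of_le_ne_top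
    (ENNReal.mul_ne_top ENNReal.coe_ne_top ENNReal.ofReal_ne_top)
    (h1.trans (mul_le_mul_right h2 _))


lemma exists_reparam {M : Type*} [MetricSpace M] {S : Set M} {x y : M} {γ : ℝ → M}
    (hγ : IsCurve S x y γ) :
    ∃ η : ℝ → M, IsCurve S x y η ∧
      LipschitzOnWith (eVariationOn γ (Set.Icc 0 1)).toNNReal η (Set.Icc 0 1) ∧
      (∀ (F : Type) (_i : PseudoEMetricSpace F) (g : M → F),
        eVariationOn (g ∘ η) (Set.Icc 0 1) = eVariationOn (g ∘ γ) (Set.Icc 0 1)) ∧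
      eVariationOn η (Set.Icc 0 1) = eVariationOn γ (Set.Icc 0 1) := by
  obtain ⟨hcont, hmaps, h0, h1, hfin⟩ := hγ
  set s : Set ℝ := Icc 0 1 with hsdef
  have h0s : (0:ℝ) ∈ s := ⟨le_rfl, zero_le_one⟩
  have h1s : (1:ℝ) ∈ s := ⟨zero_le_one, le_rfl⟩
  have hbv : BoundedVariationOn γ s := hfin
  have hlbv : LocallyBoundedVariationOn γ s := hbv.locallyBoundedVariationOn
  set ψ := variationOnFromTo γ s 0 with hψdef
  set vr := ψ 1 with hvrdef
  have hψ0 : ψ 0 = 0 := variationOnFromTo.self _ _ _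
  have hψmono : MonotoneOn ψ s := variationOnFromTo.monotoneOn hlbv h0s
  have hψcont : ContinuousOn ψ s := psi_continuousOn hcont hfin
  have hvr_eq : ENNReal.ofReal vr = eVariationOn γ s := by
    rw [hvrdef, hψdef, variationOnFromTo.eq_of_le γ s zero_le_one]
    rw [show s ∩ Icc 0 1 = s from Set.inter_self _]
    exact ENNReal.ofReal_toReal hfin
  have hvr_nonneg : 0 ≤ vr := variationOnFromTo.nonneg_of_le _ _ zero_le_one
  have himg : ψ '' s = Icc 0 vr := by
    apply Subset.antisymm
    · rintro _ ⟨t, ht, rfl⟩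
      exact ⟨hψ0 ▸ hψmono h0s ht ht.1, hψmono ht h1s ht.2⟩
    · have h2 := intermediate_value_Icc zero_le_one hψcont
      rwa [hψ0] at h2
  set p := naturalParameterization γ s 0 with hpdef
  have hpγ : ∀ t ∈ s, p (ψ t) = γ t := fun t ht =>
    edist_eq_zero.mp (edist_naturalParameterization_eq_zero hlbv h0s ht)
  have hunit : HasUnitSpeedOn p (Icc 0 vr) := by
    rw [← himg]; exact has_unit_speed_naturalParameterization γ hlbv h0s
  have hplipkey : ∀ u ∈ Icc (0:ℝ) vr, ∀ v ∈ Icc (0:ℝ) vr, u ≤ v →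
      edist (p u) (p v) ≤ edist u v := by
    intro u hu v hv huv
    have h1' : edist (p u) (p v) ≤ eVariationOn p (Icc 0 vr ∩ Icc u v) :=
      eVariationOn.edist_le p ⟨hu, le_rfl, huv⟩ ⟨hv, huv, le_rfl⟩
    rw [hunit hu hv] at h1'
    refine h1'.trans ?_
    rw [edist_dist, Real.dist_eq]
    apply ENNReal.ofReal_le_ofReal
    rw [NNReal.coe_one, one_mul, abs_sub_comm]
    exact le_abs_self _
  have hplip : LipschitzOnWith 1 p (Icc 0 vr) := by
    intro u hu v hv
    rw [ENNReal.coe_one, one_mul]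
    rcases le_total u v with huv | huv
    · exact hplipkey u hu v hv huv
    · rw [edist_comm (p u), edist_comm u]
      exact hplipkey v hv u hu huv
  rcases eq_or_lt_of_le hvr_nonneg with hvr0 | hvr0
  · -- vr = 0 : γ is constant
    have hvar0 : eVariationOn γ s = 0 := by rw [← hvr_eq, ← hvr0]; simp
    have hγconst : ∀ t ∈ s, γ t = x := by
      intro t ht
      have h2 := (eVariationOn.eq_zero_iff γ).mp hvar0 0 h0s t ht
      rw [edist_eq_zero] at h2
      rw [← h2, h0]
    have hxS : x ∈ S := h0 ▸ hmaps h0s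
    have hyx : y = x := by rw [← h1]; exact hγconst 1 h1s
    have hconstvar : ∀ (F : Type) (_i : PseudoEMetricSpace F) (g : M → F),
        eVariationOn (g ∘ γ) s = 0 := by
      intro F _i g
      apply eVariationOn.constant_on
      rintro _ ⟨t, ht, rfl⟩ _ ⟨t', ht', rfl⟩
      simp [Function.comp, hγconst t ht, hγconst t' ht']
    refine ⟨fun _ => x, ⟨continuousOn_const, fun t _ => hxS, rfl, hyx.symm, ?_⟩, ?_, ?_, ?_⟩
    · rw [eVariationOn.constant_on (by rintro _ ⟨t, _, rfl⟩ _ ⟨t', _, rfl⟩; rfl)]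
      exact ENNReal.zero_ne_top
    · intro u _ v _; simp [edist_self]
    · intro F _i g
      rw [hconstvar F _i g]
      apply eVariationOn.constant_on
      rintro _ ⟨t, ht, rfl⟩ _ ⟨t', ht', rfl⟩
      rfl
    · rw [hvar0]
      apply eVariationOn.constant_on
      rintro _ ⟨t, _, rfl⟩ _ ⟨t', _, rfl⟩
      rfl
  · -- vr > 0
    set η : ℝ → M := fun u => p (vr * u) with hηdef
    have hmemIcc : ∀ u ∈ Icc (0:ℝ) 1, vr * u ∈ Icc 0 vr := fun u hu =>
      ⟨mul_nonneg hvr0.le hu.1, by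
        calc vr * u ≤ vr * 1 := mul_le_mul_of_nonneg_left hu.2 hvr0.le
          _ = vr := mul_one vr⟩
    have hηlip : LipschitzOnWith (eVariationOn γ s).toNNReal η s := by
      intro u hu v hv
      have h2 := hplip (hmemIcc u hu) (hmemIcc v hv)
      rw [ENNReal.coe_one, one_mul] at h2
      refine h2.trans ?_
      have h3 : edist (vr*u) (vr*v) = ENNReal.ofReal vr * edist u v := by
        rw [edist_dist, edist_dist, Real.dist_eq, Real.dist_eq, ← mul_sub, abs_mul,
          abs_of_pos hvr0, ENNReal.ofReal_mul hvr0.le]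
      rw [h3, ← hvr_eq, ENNReal.coe_toNNReal ENNReal.ofReal_ne_top]
    have hη0 : η 0 = x := by
      rw [hηdef]; dsimp only; rw [mul_zero, ← hψ0, hpγ 0 h0s, h0]
    have hη1 : η 1 = y := by
      rw [hηdef]; dsimp only; rw [mul_one, hvrdef, hpγ 1 h1s, h1]
    have hηmaps : MapsTo η s S := by
      intro u hu
      have h2 : vr * u ∈ ψ '' s := himg ▸ hmemIcc u hu
      obtain ⟨t, ht, hteq⟩ := h2
      rw [hηdef]; dsimp only; rw [← hteq, hpγ t ht]
      exact hmaps ht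
    have hφmono : MonotoneOn (fun u : ℝ => vr * u) s := fun a _ b _ hab =>
      mul_le_mul_of_nonneg_left hab hvr0.le
    have hφimg : (fun u : ℝ => vr * u) '' s = Icc 0 vr := by
      apply Subset.antisymm
      · rintro _ ⟨u, hu, rfl⟩; exact hmemIcc u hu
      · rintro z hz
        refine ⟨z / vr, ⟨div_nonneg hz.1 hvr0.le, (div_le_one hvr0).mpr hz.2⟩, ?_⟩
        field_simp
    have hcompvar : ∀ (F : Type) (_i : PseudoEMetricSpace F) (g : M → F),
        eVariationOn (g ∘ η) s = eVariationOn (g ∘ γ) s := by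
      intro F _i g
      have e1 : eVariationOn (g ∘ γ) s = eVariationOn ((g ∘ p) ∘ ψ) s :=
        eVariationOn.eq_of_eqOn (fun t ht => by
          simp only [Function.comp_apply, hpγ t ht])
      have e2 : eVariationOn ((g ∘ p) ∘ ψ) s = eVariationOn (g ∘ p) (ψ '' s) :=
        eVariationOn.comp_eq_of_monotoneOn _ ψ hψmono
      have e3 : eVariationOn ((g ∘ p) ∘ (fun u : ℝ => vr * u)) s =
          eVariationOn (g ∘ p) ((fun u : ℝ => vr * u) '' s) :=
        eVariationOn.comp_eq_of_monotoneOn _ _ hφmono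
      have e4 : g ∘ η = (g ∘ p) ∘ (fun u : ℝ => vr * u) := rfl
      rw [e4, e3, hφimg, e1, e2, himg]
    have hηvar : eVariationOn η s = eVariationOn γ s := by
      have e1 : eVariationOn γ s = eVariationOn (p ∘ ψ) s :=
        eVariationOn.eq_of_eqOn (fun t ht => (hpγ t ht).symm)
      have e2 : eVariationOn (p ∘ ψ) s = eVariationOn p (ψ '' s) :=
        eVariationOn.comp_eq_of_monotoneOn _ ψ hψmono
      have e3 : eVariationOn (p ∘ (fun u : ℝ => vr * u)) s =
          eVariationOn p ((fun u : ℝ => vr * u) '' s) :=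
        eVariationOn.comp_eq_of_monotoneOn _ _ hφmono
      have e4 : η = p ∘ (fun u : ℝ => vr * u) := rfl
      rw [e4, e3, hφimg, e1, e2, himg]
    exact ⟨η, ⟨hηlip.continuousOn, hηmaps, hη0, hη1, evar_ne_top_of_lip hηlip⟩,
      hηlip, fun F _i g => hcompvar F _i g, hηvar⟩

lemma isCompact_lipS {M : Type*} [MetricSpace M] {S : Set M} (hS : IsCompact S) (C : ℝ≥0) :
    IsCompact {h : C(Icc (0:ℝ) 1, M) | LipschitzWith C ⇑h ∧ ∀ t, h t ∈ S} := by
  apply ArzelaAscoli.isCompact_of_equicontinuous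
  · have himg : ContinuousMap.toFun ''
        {h : C(Icc (0:ℝ) 1, M) | LipschitzWith C ⇑h ∧ ∀ t, h t ∈ S}
        = {h : Icc (0:ℝ) 1 → M | LipschitzWith C h ∧ ∀ t, h t ∈ S} := by
      apply Subset.antisymm
      · rintro _ ⟨h, hh, rfl⟩; exact hh
      · rintro h ⟨h1, h2⟩
        exact ⟨⟨h, h1.continuous⟩, ⟨h1, h2⟩, rfl⟩
    rw [himg]
    apply IsCompact.of_isClosed_subset (isCompact_univ_pi (fun _ => hS))
    · apply IsClosed.inter
      · show IsClosed {h : Icc (0:ℝ) 1 → M | LipschitzWith C h}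
        have heq : {h : Icc (0:ℝ) 1 → M | LipschitzWith C h} =
            ⋂ (a) (b), {h : Icc (0:ℝ) 1 → M | edist (h a) (h b) ≤ C * edist a b} := by
          ext h
          simp only [mem_setOf_eq, mem_iInter]
          exact ⟨fun hl a b => hl a b, fun hl a b => hl a b⟩
        rw [heq]
        exact isClosed_iInter fun a => isClosed_iInter fun b =>
          isClosed_le ((continuous_apply a).edist (continuous_apply b)) continuous_const
      · show IsClosed {h : Icc (0:ℝ) 1 → M | ∀ t, h t ∈ S}
        have heq : {h : Icc (0:ℝ) 1 → M | ∀ t, h t ∈ S} =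
            ⋂ t, {h : Icc (0:ℝ) 1 → M | h t ∈ S} := by
          ext h; simp [mem_iInter]
        rw [heq]
        exact isClosed_iInter fun t => (hS.isClosed).preimage (continuous_apply t)
    · rintro h ⟨_, h2⟩ t _
      exact h2 t
  · intro x₀
    rw [Metric.equicontinuousAt_iff]
    intro ε hε
    have hC1 : (0:ℝ) < (C:ℝ) + 1 := by positivity
    refine ⟨ε / ((C:ℝ) + 1), by positivity, fun x hx i => ?_⟩
    have h3 : (C:ℝ) * (ε / ((C:ℝ) + 1)) < ε := by
      rw [mul_div_assoc', div_lt_iff₀ hC1]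
      nlinarith
    calc dist ((i : C(Icc (0:ℝ) 1, M)) x₀) ((i : C(Icc (0:ℝ) 1, M)) x)
        ≤ (C:ℝ) * dist x₀ x := (i.2.1).dist_le_mul _ _
      _ = (C:ℝ) * dist x x₀ := by rw [dist_comm]
      _ ≤ (C:ℝ) * (ε / ((C:ℝ) + 1)) := mul_le_mul_of_nonneg_left hx.le C.coe_nonneg
      _ < ε := h3

lemma eventually_lt_add' {ι : Type} {l : Filter ι} {A B : ι → ℝ≥0∞} {a b v : ℝ≥0∞}
    (hA : ∀ u, u < a → ∀ᶠ j in l, u < A j) (hB : ∀ u, u < b → ∀ᶠ j in l, u < B j)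
    (hv : v < a + b) : ∀ᶠ j in l, v < A j + B j := by
  by_cases hva : v < a
  · exact (hA v hva).mono fun j hj => hj.trans_le le_self_add
  push_neg at hva
  have hb0 : b ≠ 0 := by
    rintro rfl; rw [add_zero] at hv; exact absurd hv (not_lt.mpr hva)
  by_cases ha0 : a = 0
  · rw [ha0, zero_add] at hv
    exact (hB v hv).mono fun j hj => hj.trans_le le_add_self
  have hsub : v - a < b := ENNReal.sub_lt_of_lt_add hva (by rwa [add_comm] at hv)
  obtain ⟨u, hu1, hu2⟩ := exists_between hsub
  have haT : a ≠ ⊤ := ne_top_of_le_ne_top hv.ne_top hva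
  have hw : v - u < a := by
    rcases le_or_gt v u with h | h
    · rw [tsub_eq_zero_of_le h]; exact pos_iff_ne_zero.mpr ha0
    · have hlt : v < a + u := by
        calc v = a + (v - a) := (add_tsub_cancel_of_le hva).symm
          _ < a + u := ENNReal.add_lt_add_left haT hu1
      exact ENNReal.sub_lt_of_lt_add h.le hlt
  filter_upwards [hA _ hw, hB _ hu2] with j h1 h2
  calc v ≤ (v - u) + u := le_tsub_add
    _ < A j + B j := ENNReal.add_lt_add h1 h2


end Aux

section Main
open Set Filter Topology
open scoped ENNReal NNReal

theorem stmt12 {M : Type*} [MetricSpace M] (n : ℕ) (S : Set M)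
    (hScpt : IsCompact S) (hSpc : IsPathConnected S)
    (x y : M) (hx : x ∈ S) (hy : y ∈ S) (ε : ℝ) (hε : 0 < ε) :
    IsOpen {F : {F : UniformFun M (EuclideanSpace ℝ (Fin n)) //
        LipschitzWith 1 (UniformFun.toFun F)} |
      MemF n ε S x y (UniformFun.toFun F.val)} := by
  classical
  set E := EuclideanSpace ℝ (Fin n) with hE
  have h0s : (0:ℝ) ∈ Icc (0:ℝ) 1 := ⟨le_rfl, zero_le_one⟩
  have h1s : (1:ℝ) ∈ Icc (0:ℝ) 1 := ⟨zero_le_one, le_rfl⟩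
  by_cases hdtop : dS S x y = ⊤
  · have hnocurve : ∀ γ : ℝ → M, ¬ IsCurve S x y γ := by
      intro γ hcur
      have hle : dS S x y ≤ eVariationOn γ (Icc 0 1) :=
        iInf_le_of_le γ (iInf_le _ hcur)
      rw [hdtop, top_le_iff] at hle
      exact hcur.2.2.2.2 hle
    have huniv : {F : {F : UniformFun M E // LipschitzWith 1 (UniformFun.toFun F)} |
        MemF n ε S x y (UniformFun.toFun F.val)} = univ :=
      eq_univ_of_forall (fun G γ hγ => absurd hγ (hnocurve γ))
    rw [huniv]; exact isOpen_univ
  by_cases hc0 : ENNReal.ofReal (1 - ε) * dS S x y = 0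
  · by_cases hxy : x = y
    · -- the set is empty
      have hempty : {F : {F : UniformFun M E // LipschitzWith 1 (UniformFun.toFun F)} |
          MemF n ε S x y (UniformFun.toFun F.val)} = ∅ := by
        rw [eq_empty_iff_forall_notMem]
        intro G hG
        have hcurve : IsCurve S x y (fun _ => x) :=
          ⟨continuousOn_const, fun t _ => hx, rfl, hxy ▸ rfl, by
            rw [eVariationOn.constant_on (by rintro _ ⟨t, _, rfl⟩ _ ⟨t', _, rfl⟩; rfl)]
            exact ENNReal.zero_ne_top⟩
        have h2 := hG _ hcurve
        rw [eVariationOn.constant_on (by rintro _ ⟨t, _, rfl⟩ _ ⟨t', _, rfl⟩; rfl),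
          eVariationOn.constant_on (by rintro _ ⟨t, _, rfl⟩ _ ⟨t', _, rfl⟩; rfl), hc0] at h2
        simp at h2
      rw [hempty]; exact isOpen_empty
    · have huniv : {F : {F : UniformFun M E // LipschitzWith 1 (UniformFun.toFun F)} |
          MemF n ε S x y (UniformFun.toFun F.val)} = univ := by
        apply eq_univ_of_forall
        intro G γ hγ
        have h1 : edist x y ≤ eVariationOn γ (Icc 0 1) := by
          have h2 := eVariationOn.edist_le γ h0s h1s
          rwa [hγ.2.2.1, hγ.2.2.2.1] at h2
        have h2 : eVariationOn γ (Icc 0 1) ≠ 0 :=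
          ((edist_pos.mpr hxy).trans_le h1).ne'
        calc ENNReal.ofReal (1 - ε) * dS S x y = 0 := hc0
          _ < ENNReal.ofReal ε * eVariationOn γ (Icc 0 1) :=
            ENNReal.mul_pos (ENNReal.ofReal_pos.mpr hε).ne' h2
          _ ≤ eVariationOn (UniformFun.toFun G.val ∘ γ) (Icc 0 1) +
              ENNReal.ofReal ε * eVariationOn γ (Icc 0 1) := le_add_self
      rw [huniv]; exact isOpen_univ
  -- main case
  set c := ENNReal.ofReal (1 - ε) * dS S x y with hc
  have hcT : c ≠ ⊤ := ENNReal.mul_ne_top ENNReal.ofReal_ne_top hdtop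
  set e := ENNReal.ofReal ε with he
  have he0 : e ≠ 0 := (ENNReal.ofReal_pos.mpr hε).ne'
  have heT : e ≠ ⊤ := ENNReal.ofReal_ne_top
  rw [isOpen_iff_mem_nhds]
  rintro F hF
  have hfl : LipschitzWith 1 (UniformFun.toFun F.val) := F.2
  set fM : M → E := UniformFun.toFun F.val with hfM
  have key : ∃ δ : ℝ, 0 < δ ∧
      ∀ G : {F : UniformFun M E // LipschitzWith 1 (UniformFun.toFun F)},
      (∀ z : M, dist (fM z) (UniformFun.toFun G.val z) < δ) →
        MemF n ε S x y (UniformFun.toFun G.val) := by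
    by_contra hcon
    push_neg at hcon
    choose G hGdist hGmem using fun k : ℕ => hcon (1/(k+1 : ℝ)) (by positivity)
    have hbad : ∀ k : ℕ, ∃ γk, IsCurve S x y γk ∧
        eVariationOn (UniformFun.toFun (G k).val ∘ γk) (Icc 0 1) +
          e * eVariationOn γk (Icc 0 1) ≤ c := by
      intro k
      have h2 := hGmem k
      rw [MemF] at h2; push_neg at h2
      obtain ⟨γk, hk1, hk2⟩ := h2
      exact ⟨γk, hk1, hk2⟩
    choose γ' hγ' hγle using hbad
    have hrep := fun k => exists_reparam (hγ' k)
    choose η hηcurve hηlip hηcomp hηvar using hrep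
    have hvarle : ∀ k, eVariationOn (γ' k) (Icc 0 1) ≤ c / e := by
      intro k
      rw [ENNReal.le_div_iff_mul_le (Or.inl he0) (Or.inl heT)]
      calc eVariationOn (γ' k) (Icc 0 1) * e = e * eVariationOn (γ' k) (Icc 0 1) :=
            mul_comm _ _
        _ ≤ eVariationOn (UniformFun.toFun (G k).val ∘ γ' k) (Icc 0 1) +
            e * eVariationOn (γ' k) (Icc 0 1) := le_add_self
        _ ≤ c := hγle k
    have hdivT : c / e ≠ ⊤ := (ENNReal.div_lt_top hcT he0).ne
    set C : ℝ≥0 := (c / e).toNNReal with hCdef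
    have hlipC : ∀ k, LipschitzOnWith C (η k) (Icc 0 1) := by
      intro k u hu v hv
      refine (hηlip k hu hv).trans ?_
      exact mul_le_mul_left
        (ENNReal.coe_le_coe.mpr (ENNReal.toNNReal_mono hdivT (hvarle k))) _
    set K := {h : C(Icc (0:ℝ) 1, M) | LipschitzWith C ⇑h ∧ ∀ t, h t ∈ S} with hKdef
    have hcmpt : IsCompact K := isCompact_lipS hScpt C
    set η' : ℕ → C(Icc (0:ℝ) 1, M) :=
      fun k => ⟨fun t => η k ↑t, ((hlipC k).to_restrict).continuous⟩ with hη'def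
    have hηK : ∀ k, η' k ∈ K := fun k =>
      ⟨(hlipC k).to_restrict, fun t => (hηcurve k).2.1 t.2⟩
    obtain ⟨ηl, hηlK, φ, hφmono, hφtend⟩ := hcmpt.tendsto_subseq hηK
    set γinf : ℝ → M := fun r => ηl (projIcc 0 1 zero_le_one r) with hγinf
    have hptwise : ∀ t : Icc (0:ℝ) 1, Tendsto (fun j => η (φ j) ↑t) atTop (𝓝 (ηl t)) := by
      intro t
      exact ((ContinuousEvalConst.continuous_eval_const t).tendsto ηl).comp hφtend
    have hpt : ∀ t ∈ Icc (0:ℝ) 1, Tendsto (fun j => η (φ j) t) atTop (𝓝 (γinf t)) := by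
      intro t ht
      have h2 := hptwise ⟨t, ht⟩
      rw [hγinf]; dsimp only
      rw [projIcc_of_mem _ ht]
      exact h2
    have hlipinf : LipschitzOnWith C γinf (Icc 0 1) := by
      intro u hu v hv
      have h2 := hηlK.1 ⟨u, hu⟩ ⟨v, hv⟩
      rw [hγinf]; dsimp only
      rw [projIcc_of_mem _ hu, projIcc_of_mem _ hv]
      rwa [Subtype.edist_eq] at h2
    have hcurveinf : IsCurve S x y γinf := by
      refine ⟨(ηl.continuous.comp continuous_projIcc).continuousOn,
        fun t _ => hηlK.2 _, ?_, ?_, evar_ne_top_of_lip hlipinf⟩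
      · have h2 := hpt 0 h0s
        have h3 : ∀ j, η (φ j) (0:ℝ) = x := fun j => (hηcurve (φ j)).2.2.1
        simp only [h3] at h2
        exact (tendsto_nhds_unique h2 tendsto_const_nhds).symm ▸ rfl
      · have h2 := hpt 1 h1s
        have h3 : ∀ j, η (φ j) (1:ℝ) = y := fun j => (hηcurve (φ j)).2.2.2.1
        simp only [h3] at h2
        exact (tendsto_nhds_unique h2 tendsto_const_nhds).symm ▸ rfl
    have hptcomp : ∀ t ∈ Icc (0:ℝ) 1,
        Tendsto (fun j => (UniformFun.toFun (G (φ j)).val ∘ η (φ j)) t) atTop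
          (𝓝 ((fM ∘ γinf) t)) := by
      intro t ht
      have h1 := hpt t ht
      rw [tendsto_iff_dist_tendsto_zero]
      apply squeeze_zero (fun j => dist_nonneg)
        (g := fun j => 1/((φ j : ℝ) + 1) + dist (η (φ j) t) (γinf t))
      · intro j
        calc dist ((UniformFun.toFun (G (φ j)).val ∘ η (φ j)) t) ((fM ∘ γinf) t)
            ≤ dist (UniformFun.toFun (G (φ j)).val (η (φ j) t)) (fM (η (φ j) t)) +
              dist (fM (η (φ j) t)) (fM (γinf t)) := dist_triangle _ _ _
          _ ≤ 1/((φ j : ℝ) + 1) + dist (η (φ j) t) (γinf t) := by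
              apply add_le_add
              · rw [dist_comm]
                exact (hGdist (φ j) (η (φ j) t)).le
              · simpa using hfl.dist_le_mul (η (φ j) t) (γinf t)
      · have t1 : Tendsto (fun j => 1/((φ j : ℝ) + 1)) atTop (𝓝 0) :=
          tendsto_one_div_add_atTop_nhds_zero_nat.comp hφmono.tendsto_atTop
        have t2 : Tendsto (fun j => dist (η (φ j) t) (γinf t)) atTop (𝓝 0) :=
          tendsto_iff_dist_tendsto_zero.mp h1
        simpa using t1.add t2
    have hmain : c < eVariationOn (fM ∘ γinf) (Icc 0 1) +
        e * eVariationOn γinf (Icc 0 1) := hF γinf hcurveinf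
    have hA : ∀ u, u < eVariationOn (fM ∘ γinf) (Icc 0 1) → ∀ᶠ j in atTop,
        u < eVariationOn (UniformFun.toFun (G (φ j)).val ∘ η (φ j)) (Icc 0 1) :=
      fun u hu => eVariationOn.lowerSemicontinuous_aux hptcomp hu
    have hB' : ∀ u, u < eVariationOn γinf (Icc 0 1) → ∀ᶠ j in atTop,
        u < eVariationOn (η (φ j)) (Icc 0 1) :=
      fun u hu => eVariationOn.lowerSemicontinuous_aux hpt hu
    have hBe : ∀ u, u < e * eVariationOn γinf (Icc 0 1) → ∀ᶠ j in atTop,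
        u < e * eVariationOn (η (φ j)) (Icc 0 1) := by
      intro u hu
      have hdiv : u / e < eVariationOn γinf (Icc 0 1) := by
        rw [ENNReal.div_lt_iff (Or.inl he0) (Or.inl heT)]
        rwa [mul_comm] at hu
      filter_upwards [hB' _ hdiv] with j hj
      have h2 := (ENNReal.mul_lt_mul_iff_right he0 heT).mpr hj
      rwa [ENNReal.mul_div_cancel he0 heT] at h2
    have hfinal := eventually_lt_add' hA hBe hmain
    obtain ⟨j, hj⟩ := hfinal.exists
    rw [hηcomp (φ j) E inferInstance (UniformFun.toFun (G (φ j)).val),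
      hηvar (φ j)] at hj
    exact absurd hj (not_lt.mpr (hγle (φ j)))
  obtain ⟨δ, hδ, hkey⟩ := key
  obtain ⟨Fv, hFlip⟩ := F
  rw [nhds_subtype_eq_comap]
  have hU : {g : UniformFun M E | ∀ z, dist (fM z) (UniformFun.toFun g z) < δ}
      ∈ 𝓝 Fv := by
    have hb := UniformFun.hasBasis_nhds M E Fv
    refine mem_of_superset (hb.mem_of_mem (Metric.dist_mem_uniformity hδ)) ?_
    intro g hg z
    exact hg z
  refine mem_of_superset (preimage_mem_comap hU) ?_
  intro G hG
  exact hkey G hG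

end Main
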